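/- Let F be a field of characteristic different from 2 and n, m ≥ 1. Let osp(n,m) denote the subspace of M_{n+2m}(F) consisting of block matrices [[A, B], [C, D]] where A ∈ M_n(F) with Aᵀ = A, B ∈ M_{n,2m}(F), C = Q⁻¹Bᵀ, and D ∈ M_{2m}(F) with D = Q⁻¹DᵀQ, where Q = [[0, E_m], [−E_m, 0]] (E_m the m×m identity). Grade osp(n,m) with even part the block-diagonal matrices (B = 0, C = 0) and odd part the block-off-diagonal matrices (A = 0, D = 0), and equip it with the super-symmetrized product: for x = x₀ + x₁ and y = y₀ + y₁ decomposed into even and odd parts, x∘y is bilinear with x₀∘y₀ = (1/2)(x₀y₀ + y₀x₀), x₀∘y₁ = (1/2)(x₀y₁ + y₁x₀), x₁∘y₀ = (1/2)(x₁y₀ + y₀x₁), and x₁∘y₁ = (1/2)(x₁y₁ − y₁x₁). Then every 1/2-derivation φ of osp(n,m) is of the form φ(x) = α·x for some α ∈ F. -/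

import Mathlib

/-- The even (block-diagonal) part of a matrix indexed by `α ⊕ β`. -/
def blockDiagPart {F : Type*} [Field F] {α β : Type*}
    (x : Matrix (α ⊕ β) (α ⊕ β) F) : Matrix (α ⊕ β) (α ⊕ β) F :=
  Matrix.of fun i j => if i.isLeft = j.isLeft then x i j else 0

/-- The super-symmetrized product `∘` on block matrices: writing
`x = x₀ + x₁` with `x₀` the block-diagonal (even) part and `x₁` the
block-off-diagonal (odd) part, `x ∘ y` is bilinear with
`x₀∘y₀ = (1/2)(x₀y₀ + y₀x₀)`, `x₀∘y₁ = (1/2)(x₀y₁ + y₁x₀)`,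
`x₁∘y₀ = (1/2)(x₁y₀ + y₀x₁)` and `x₁∘y₁ = (1/2)(x₁y₁ − y₁x₁)`. -/
def superMul {F : Type*} [Field F] {α β : Type*} [Fintype α] [Fintype β]
    (x y : Matrix (α ⊕ β) (α ⊕ β) F) : Matrix (α ⊕ β) (α ⊕ β) F :=
  (1 / 2 : F) •
    (blockDiagPart x * blockDiagPart y + blockDiagPart y * blockDiagPart x
      + blockDiagPart x * (y - blockDiagPart y) + (y - blockDiagPart y) * blockDiagPart x
      + (x - blockDiagPart x) * blockDiagPart y + blockDiagPart y * (x - blockDiagPart x)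
      + (x - blockDiagPart x) * (y - blockDiagPart y)
      - (y - blockDiagPart y) * (x - blockDiagPart x))

/-- The matrix `Q = [[0, Eₘ], [−Eₘ, 0]] ∈ M_{2m}(F)`. -/
def ospQmat (F : Type*) [Field F] (m : ℕ) :
    Matrix (Fin m ⊕ Fin m) (Fin m ⊕ Fin m) F :=
  Matrix.fromBlocks 0 1 (-1) 0

/-- The subspace `osp(n,m)` of `M_{n+2m}(F)`: block matrices
`[[A, B], [C, D]]` with `Aᵀ = A`, `C = Q⁻¹Bᵀ` and `D = Q⁻¹DᵀQ`. -/
def ospSub (F : Type*) [Field F] (n m : ℕ) :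
    Submodule F (Matrix (Fin n ⊕ (Fin m ⊕ Fin m)) (Fin n ⊕ (Fin m ⊕ Fin m)) F) where
  carrier := {x | x.toBlocks₁₁.transpose = x.toBlocks₁₁
    ∧ x.toBlocks₂₁ = (ospQmat F m)⁻¹ * x.toBlocks₁₂.transpose
    ∧ x.toBlocks₂₂ = (ospQmat F m)⁻¹ * x.toBlocks₂₂.transpose * ospQmat F m}
  add_mem' := by
    rintro a b ⟨ha1, ha2, ha3⟩ ⟨hb1, hb2, hb3⟩
    refine ⟨?_, ?_, ?_⟩
    · show (a.toBlocks₁₁ + b.toBlocks₁₁).transpose = a.toBlocks₁₁ + b.toBlocks₁₁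
      rw [Matrix.transpose_add, ha1, hb1]
    · show a.toBlocks₂₁ + b.toBlocks₂₁
        = (ospQmat F m)⁻¹ * (a.toBlocks₁₂ + b.toBlocks₁₂).transpose
      rw [Matrix.transpose_add, Matrix.mul_add, ← ha2, ← hb2]
    · show a.toBlocks₂₂ + b.toBlocks₂₂
        = (ospQmat F m)⁻¹ * (a.toBlocks₂₂ + b.toBlocks₂₂).transpose * ospQmat F m
      rw [Matrix.transpose_add, Matrix.mul_add, Matrix.add_mul, ← ha3, ← hb3]
  zero_mem' := by
    refine ⟨?_, ?_, ?_⟩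
    · show (0 : Matrix (Fin n) (Fin n) F).transpose = 0
      simp
    · show (0 : Matrix (Fin m ⊕ Fin m) (Fin n) F)
        = (ospQmat F m)⁻¹ * (0 : Matrix (Fin n) (Fin m ⊕ Fin m) F).transpose
      simp
    · show (0 : Matrix (Fin m ⊕ Fin m) (Fin m ⊕ Fin m) F)
        = (ospQmat F m)⁻¹ * (0 : Matrix (Fin m ⊕ Fin m) (Fin m ⊕ Fin m) F).transpose * ospQmat F m
      simp
  smul_mem' := by
    rintro c x ⟨h1, h2, h3⟩
    refine ⟨?_, ?_, ?_⟩
    · show (c • x.toBlocks₁₁).transpose = c • x.toBlocks₁₁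
      rw [Matrix.transpose_smul, h1]
    · show c • x.toBlocks₂₁ = (ospQmat F m)⁻¹ * (c • x.toBlocks₁₂).transpose
      rw [Matrix.transpose_smul, Matrix.mul_smul, ← h2]
    · show c • x.toBlocks₂₂ = (ospQmat F m)⁻¹ * (c • x.toBlocks₂₂).transpose * ospQmat F m
      rw [Matrix.transpose_smul, Matrix.mul_smul, Matrix.smul_mul, ← h3]

section ospHelpers

variable {F : Type*} [Field F] {α β : Type*} [Fintype α] [Fintype β]

omit [Fintype α] [Fintype β] in
lemma blockDiagPart_fromBlocks (A : Matrix α α F) (B : Matrix α β F)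
    (C : Matrix β α F) (D : Matrix β β F) :
    blockDiagPart (Matrix.fromBlocks A B C D) = Matrix.fromBlocks A 0 0 D := by
  ext i j
  rcases i with i | i <;> rcases j with j | j <;>
    simp [blockDiagPart, Matrix.fromBlocks]

lemma superMul_of_diag_left (x y : Matrix (α ⊕ β) (α ⊕ β) F)
    (hx : blockDiagPart x = x) :
    superMul x y = (1/2 : F) • (x * y + y * x) := by
  unfold superMul
  rw [hx]
  congr 1
  noncomm_ring

lemma superMul_of_diag_right (x y : Matrix (α ⊕ β) (α ⊕ β) F)
    (hy : blockDiagPart y = y) :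
    superMul x y = (1/2 : F) • (x * y + y * x) := by
  unfold superMul
  rw [hy]
  congr 1
  noncomm_ring

lemma eq_zero_of_smul_eq_smul {M : Type*} [AddCommGroup M] [Module F M]
    {a b : F} (hab : a ≠ b) {v : M} (h : a • v = b • v) : v = 0 := by
  have h0 : (a - b) • v = 0 := by rw [sub_smul, h, sub_self]
  exact (smul_eq_zero.mp h0).resolve_left (sub_ne_zero.mpr hab)

end ospHelpers

/-- **1/2-derivations of the Jordan superalgebra `osp(n,m)`.**
Let `F` be a field of characteristic not `2` and `n, m ≥ 1`.  Every
`1/2`-derivation `φ` of `osp(n,m)` (with the super-symmetrized product `∘`)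
is of the form `φ x = α • x` for some `α ∈ F`.  (The `1/2`-derivation
property is stated via representatives: whenever `z ∈ osp(n,m)` equals
`x ∘ y` as a matrix, `φ z = (1/2) • (φ x ∘ y + x ∘ φ y)`.) -/
theorem half_derivation_of_osp
    {F : Type*} [Field F] (hchar : (2 : F) ≠ 0) (n m : ℕ) (hn : 1 ≤ n) (hm : 1 ≤ m)
    (φ : ospSub F n m →ₗ[F] ospSub F n m)
    (hφ : ∀ x y z : ospSub F n m,
      (z : Matrix (Fin n ⊕ (Fin m ⊕ Fin m)) (Fin n ⊕ (Fin m ⊕ Fin m)) F)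
          = superMul (x : Matrix (Fin n ⊕ (Fin m ⊕ Fin m)) (Fin n ⊕ (Fin m ⊕ Fin m)) F)
              (y : Matrix (Fin n ⊕ (Fin m ⊕ Fin m)) (Fin n ⊕ (Fin m ⊕ Fin m)) F) →
      (φ z : Matrix (Fin n ⊕ (Fin m ⊕ Fin m)) (Fin n ⊕ (Fin m ⊕ Fin m)) F)
        = (1 / 2 : F) •
            (superMul (φ x : Matrix (Fin n ⊕ (Fin m ⊕ Fin m)) (Fin n ⊕ (Fin m ⊕ Fin m)) F)
                (y : Matrix (Fin n ⊕ (Fin m ⊕ Fin m)) (Fin n ⊕ (Fin m ⊕ Fin m)) F)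
              + superMul (x : Matrix (Fin n ⊕ (Fin m ⊕ Fin m)) (Fin n ⊕ (Fin m ⊕ Fin m)) F)
                (φ y : Matrix (Fin n ⊕ (Fin m ⊕ Fin m)) (Fin n ⊕ (Fin m ⊕ Fin m)) F))) :
    ∃ α : F, ∀ x : ospSub F n m, φ x = α • x := by
  
  classical
  -- notation for the big matrix type
  set Q : Matrix (Fin m ⊕ Fin m) (Fin m ⊕ Fin m) F := ospQmat F m with hQdef
  have hQinv : Q⁻¹ = Matrix.fromBlocks 0 (-1) 1 (0 : Matrix (Fin m) (Fin m) F) := by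
    apply Matrix.inv_eq_right_inv
    rw [hQdef]
    unfold ospQmat
    rw [Matrix.fromBlocks_multiply, ← Matrix.fromBlocks_one]
    simp
  have hQQ : Q⁻¹ * Q = 1 := by
    rw [hQinv, hQdef]
    unfold ospQmat
    rw [Matrix.fromBlocks_multiply, ← Matrix.fromBlocks_one]
    simp
  have memosp : ∀ (A : Matrix (Fin n) (Fin n) F) (B : Matrix (Fin n) (Fin m ⊕ Fin m) F)
      (D : Matrix (Fin m ⊕ Fin m) (Fin m ⊕ Fin m) F), A.transpose = A →
      D = Q⁻¹ * D.transpose * Q →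
      Matrix.fromBlocks A B (Q⁻¹ * B.transpose) D ∈ ospSub F n m := by
    intro A B D h1 h2
    refine ⟨?_, ?_, ?_⟩ <;>
      simp [Matrix.toBlocks_fromBlocks₁₁, Matrix.toBlocks_fromBlocks₁₂,
        Matrix.toBlocks_fromBlocks₂₁, Matrix.toBlocks_fromBlocks₂₂, hQdef, h1, ← h2]
    exact h2
  -- the identity matrix and the idempotent e₁ are in osp
  have h1mem : (1 : Matrix (Fin n ⊕ (Fin m ⊕ Fin m)) (Fin n ⊕ (Fin m ⊕ Fin m)) F)
      ∈ ospSub F n m := by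
    have := memosp 1 0 1 (by simp)
      (by rw [Matrix.transpose_one, Matrix.mul_one, hQQ])
    rw [← Matrix.fromBlocks_one]
    simpa using this
  set eM : Matrix (Fin n ⊕ (Fin m ⊕ Fin m)) (Fin n ⊕ (Fin m ⊕ Fin m)) F :=
    Matrix.fromBlocks 1 0 0 0 with heM
  have heMmem : eM ∈ ospSub F n m := by
    have := memosp 1 0 0 (by simp) (by simp)
    rw [heM]
    simpa using this
  set oneS : ospSub F n m := ⟨1, h1mem⟩ with honeS
  set e1 : ospSub F n m := ⟨eM, heMmem⟩ with he1
  have honecoe : ((oneS : Matrix (Fin n ⊕ (Fin m ⊕ Fin m)) (Fin n ⊕ (Fin m ⊕ Fin m)) F)) = 1 := rfl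
  have he1coe : ((e1 : Matrix (Fin n ⊕ (Fin m ⊕ Fin m)) (Fin n ⊕ (Fin m ⊕ Fin m)) F)) = eM := rfl
  -- arithmetic helpers
  have halfadd : ∀ v : Matrix (Fin n ⊕ (Fin m ⊕ Fin m)) (Fin n ⊕ (Fin m ⊕ Fin m)) F,
      (1/2 : F) • (v + v) = v := by
    intro v
    rw [← two_smul F v, smul_smul, one_div, inv_mul_cancel₀ hchar, one_smul]
  have halfsolve : ∀ v w : Matrix (Fin n ⊕ (Fin m ⊕ Fin m)) (Fin n ⊕ (Fin m ⊕ Fin m)) F,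
      v = (1/2 : F) • (v + w) → v = w := by
    intro v w h
    have h2 : v + v = v + w := by
      rw [← two_smul F v]
      calc (2:F) • v = (2:F) • ((1/2:F) • (v + w)) := by rw [← h]
        _ = v + w := by rw [smul_smul, mul_one_div_cancel hchar, one_smul]
    exact add_left_cancel h2
  have hbd1 : blockDiagPart (1 : Matrix (Fin n ⊕ (Fin m ⊕ Fin m)) (Fin n ⊕ (Fin m ⊕ Fin m)) F)
      = 1 := by
    rw [← Matrix.fromBlocks_one, blockDiagPart_fromBlocks]
  have hbde : blockDiagPart eM = eM := by rw [heM, blockDiagPart_fromBlocks]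
  have hsm1 : ∀ x : Matrix (Fin n ⊕ (Fin m ⊕ Fin m)) (Fin n ⊕ (Fin m ⊕ Fin m)) F,
      superMul x 1 = x := by
    intro x
    rw [superMul_of_diag_right _ _ hbd1, Matrix.mul_one, Matrix.one_mul, halfadd]
  -- Step 1 : φ x = x ∘ c   with c = φ 1
  set c : ospSub F n m := φ oneS with hcdef
  set cM : Matrix (Fin n ⊕ (Fin m ⊕ Fin m)) (Fin n ⊕ (Fin m ⊕ Fin m)) F := ↑c with hcM
  have hR : ∀ x : ospSub F n m,
      ((φ x : Matrix (Fin n ⊕ (Fin m ⊕ Fin m)) (Fin n ⊕ (Fin m ⊕ Fin m)) F))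
        = superMul (↑x) cM := by
    intro x
    have h := hφ x oneS x (by rw [honecoe, hsm1])
    rw [honecoe, hsm1, ← hcdef, ← hcM] at h
    exact halfsolve _ _ h
  -- blocks of c
  obtain ⟨hcA, hcC, hcD⟩ := c.2
  have hcblocks : cM = Matrix.fromBlocks cM.toBlocks₁₁ cM.toBlocks₁₂ cM.toBlocks₂₁ cM.toBlocks₂₂ :=
    (Matrix.fromBlocks_toBlocks cM).symm
  set A := cM.toBlocks₁₁ with hA
  set Bc := cM.toBlocks₁₂ with hBc
  set Cc := cM.toBlocks₂₁ with hCc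
  set Dc := cM.toBlocks₂₂ with hDc
  -- Step 2 : the odd part of c vanishes
  have hee : eM * eM = eM := by
    rw [heM, Matrix.fromBlocks_multiply]
    simp
  have hpre : ((e1 : Matrix (Fin n ⊕ (Fin m ⊕ Fin m)) (Fin n ⊕ (Fin m ⊕ Fin m)) F))
      = superMul eM eM := by
    rw [he1coe, superMul_of_diag_left _ _ hbde, hee, halfadd]
  have h2 := hφ e1 e1 e1 hpre
  rw [hR e1, he1coe] at h2
  rw [superMul_of_diag_left eM cM hbde] at h2
  rw [superMul_of_diag_right _ eM hbde, superMul_of_diag_left eM _ hbde] at h2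
  rw [hcblocks, heM] at h2
  simp only [Matrix.fromBlocks_multiply, Matrix.fromBlocks_add, Matrix.fromBlocks_smul,
    Matrix.mul_zero, Matrix.zero_mul, Matrix.mul_one, Matrix.one_mul, add_zero, zero_add,
    smul_zero, Matrix.smul_mul, Matrix.mul_smul, smul_add, smul_smul] at h2
  rw [Matrix.fromBlocks_inj] at h2
  obtain ⟨hA2, hB2, hC2, hD2⟩ := h2
  clear hA2 hD2
  have h4 : (4:F) ≠ 0 := by
    have := mul_ne_zero hchar hchar
    rwa [show (2:F)*2 = 4 from by norm_num] at this
  have hcoef : (1/2:F)*(1/2*(1/2)) + 1/2*(1/2*(1/2)) = 1/4 := by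
    field_simp [h4]
    ring
  have hne : (1/2:F) ≠ 1/2*(1/2*(1/2)) + 1/2*(1/2*(1/2)) := by
    rw [hcoef]
    intro h
    apply hchar
    field_simp [h4] at h
    linear_combination h
  rw [← add_smul] at hB2 hC2
  have hBc0 : Bc = 0 := eq_zero_of_smul_eq_smul hne hB2
  have hCc0 : Cc = 0 := eq_zero_of_smul_eq_smul hne hC2
  rw [hBc0, hCc0] at hcblocks
  have hbdc : blockDiagPart cM = cM := by
    rw [hcblocks, blockDiagPart_fromBlocks]
  -- Step 3 : B * Dc = A * B for every B
  have key : ∀ (p : Fin n) (q : Fin m ⊕ Fin m),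
      Matrix.single p q (1:F) * Dc = A * Matrix.single p q (1:F) := by
    intro p q
    set B : Matrix (Fin n) (Fin m ⊕ Fin m) F := Matrix.single p q (1:F) with hB
    set xM : Matrix (Fin n ⊕ (Fin m ⊕ Fin m)) (Fin n ⊕ (Fin m ⊕ Fin m)) F :=
      Matrix.fromBlocks 0 B (Q⁻¹ * B.transpose) 0 with hxM
    have hxmem : xM ∈ ospSub F n m := memosp 0 B 0 (by simp) (by simp)
    set x : ospSub F n m := ⟨xM, hxmem⟩ with hx
    have hxcoe : ((x : Matrix (Fin n ⊕ (Fin m ⊕ Fin m)) (Fin n ⊕ (Fin m ⊕ Fin m)) F)) = xM := rfl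
    set z : ospSub F n m := (1/2 : F) • x with hz
    have hzcoe : ((z : Matrix (Fin n ⊕ (Fin m ⊕ Fin m)) (Fin n ⊕ (Fin m ⊕ Fin m)) F))
        = (1/2:F) • xM := rfl
    have hxe : xM * eM + eM * xM = xM := by
      rw [hxM, heM]
      rw [Matrix.fromBlocks_multiply, Matrix.fromBlocks_multiply, Matrix.fromBlocks_add]
      simp
    have hpre3 : ((z : Matrix (Fin n ⊕ (Fin m ⊕ Fin m)) (Fin n ⊕ (Fin m ⊕ Fin m)) F))
        = superMul xM eM := by
      rw [hzcoe, superMul_of_diag_right _ _ hbde, hxe]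
    have hφz : ((φ z : Matrix (Fin n ⊕ (Fin m ⊕ Fin m)) (Fin n ⊕ (Fin m ⊕ Fin m)) F))
        = (1/2:F) • ((φ x : Matrix (Fin n ⊕ (Fin m ⊕ Fin m)) (Fin n ⊕ (Fin m ⊕ Fin m)) F)) := by
      rw [hz, map_smul]
      rfl
    have hbdec : blockDiagPart ((1/2:F) • (eM * cM + cM * eM))
        = (1/2:F) • (eM * cM + cM * eM) := by
      rw [heM, hcblocks, Matrix.fromBlocks_multiply, Matrix.fromBlocks_multiply,
        Matrix.fromBlocks_add, Matrix.fromBlocks_smul, blockDiagPart_fromBlocks]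
      simp
    have h3 := hφ x e1 z (by rw [hxcoe, he1coe]; exact hpre3)
    rw [hφz, hR x, hR e1, hxcoe, he1coe] at h3
    rw [superMul_of_diag_left eM cM hbde] at h3
    rw [superMul_of_diag_right xM cM hbdc] at h3
    rw [superMul_of_diag_right _ eM hbde] at h3
    rw [superMul_of_diag_right xM _ hbdec] at h3
    rw [hxM, heM, hcblocks] at h3
    simp only [Matrix.fromBlocks_multiply, Matrix.fromBlocks_add, Matrix.fromBlocks_smul,
      Matrix.mul_zero, Matrix.zero_mul, Matrix.mul_one, Matrix.one_mul, add_zero, zero_add,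
      smul_zero, Matrix.smul_mul, Matrix.mul_smul, smul_add, smul_smul, add_mul,
      mul_assoc] at h3
    rw [Matrix.fromBlocks_inj] at h3
    obtain ⟨h31, h32, h33, h34⟩ := h3
    clear h31 h33 h34
    have h8 : (8:F) ≠ 0 := by
      have := mul_ne_zero hchar h4
      rwa [show (2:F)*4 = 8 from by norm_num] at this
    have co2 : (8:F) * (1/2*(1/2)) = 2 := by
      field_simp [h4]
      norm_num
    have co1 : (8:F) * (1/2*(1/2*(1/2))) = 1 := by
      field_simp [h8]
      norm_num
    simp only [Matrix.add_mul, Matrix.mul_add, Matrix.smul_mul, smul_add, smul_smul,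
      mul_assoc] at h32
    have h8m := congrArg (fun t => (8:F) • t) h32
    simp only [smul_add, smul_smul, mul_assoc] at h8m
    simp only [co1, co2, one_smul] at h8m
    linear_combination (norm := module) h8m
  -- Step 4 : extract entries, conclude c is scalar
  have entry : ∀ (p i : Fin n) (q k : Fin m ⊕ Fin m),
      (if p = i then Dc q k else 0) = (if q = k then A i p else 0) := by
    intro p i q k
    have h' := congrFun (congrFun (key p q) i) k
    simpa [Matrix.mul_apply, Matrix.single, ite_and] using h'
  set p0 : Fin n := ⟨0, hn⟩ with hp0
  set q0 : Fin m ⊕ Fin m := Sum.inl ⟨0, hm⟩ with hq0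
  set α : F := A p0 p0 with hα
  have hDdiag : ∀ q k : Fin m ⊕ Fin m, Dc q k = if q = k then α else 0 := by
    intro q k
    have h' := entry p0 p0 q k
    rw [if_pos rfl] at h'
    exact h'
  have hAentry : ∀ i j : Fin n, A i j = if i = j then α else 0 := by
    intro i j
    have h' := entry j i q0 q0
    rw [if_pos rfl, hDdiag q0 q0, if_pos rfl] at h'
    rcases eq_or_ne i j with hij | hij
    · subst hij
      rw [if_pos rfl] at h' ⊢
      exact h'.symm
    · rw [if_neg (Ne.symm hij)] at h'
      rw [if_neg hij]
      exact h'.symm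
  have hAmat : A = α • (1 : Matrix (Fin n) (Fin n) F) := by
    ext i j
    rw [hAentry i j]
    by_cases hij : i = j <;> simp [Matrix.one_apply, hij]
  have hDmat : Dc = α • (1 : Matrix (Fin m ⊕ Fin m) (Fin m ⊕ Fin m) F) := by
    ext q k
    rw [hDdiag q k]
    by_cases hqk : q = k <;> simp [Matrix.one_apply, hqk]
  have hone : (1 : Matrix (Fin n ⊕ (Fin m ⊕ Fin m)) (Fin n ⊕ (Fin m ⊕ Fin m)) F)
      = Matrix.fromBlocks 1 0 0 1 := Matrix.fromBlocks_one.symm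
  have hcfin : cM = α • (1 : Matrix (Fin n ⊕ (Fin m ⊕ Fin m)) (Fin n ⊕ (Fin m ⊕ Fin m)) F) := by
    rw [hcblocks, hAmat, hDmat, hone, Matrix.fromBlocks_smul]
    simp
  have hbdsc : blockDiagPart
        (α • (1 : Matrix (Fin n ⊕ (Fin m ⊕ Fin m)) (Fin n ⊕ (Fin m ⊕ Fin m)) F))
      = α • (1 : Matrix (Fin n ⊕ (Fin m ⊕ Fin m)) (Fin n ⊕ (Fin m ⊕ Fin m)) F) := by
    rw [hone, Matrix.fromBlocks_smul, blockDiagPart_fromBlocks]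
    simp
  refine ⟨α, fun x => ?_⟩
  apply Subtype.ext
  rw [hR x, hcfin, superMul_of_diag_right _ _ hbdsc, Matrix.mul_smul, Matrix.smul_mul,
    Matrix.mul_one, Matrix.one_mul, halfadd]
  rfl
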